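/- The optimal tour cost is not submodular: in the Euclidean plane ℝ² with the Euclidean distance, there exist a depot o ∈ ℝ², finite sets A ⊆ B ⊆ ℝ², and a point x ∈ ℝ² with x ∉ B, such that T(o, B ∪ {x}) − T(o, B) > T(o, A ∪ {x}) − T(o, A). -/

import Mathlib

noncomputable section

/-- Length of a walk through a list of points in a metric space. -/
def walkLen {X : Type*} [MetricSpace X] : List X → ℝ
  | [] => 0
  | [_] => 0
  | a :: b :: rest => dist a b + walkLen (b :: rest)

/-- Closed-walk length `L(o; q₁, …, q_m)`: leave the depot `o`, visit the points
in order, and return to `o`.  For the empty sequence this is `dist o o = 0`. -/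
def closedWalkLen {X : Type*} [MetricSpace X] (o : X) (l : List X) : ℝ :=
  walkLen (o :: l ++ [o])

/-- Optimal tour cost `T(o, P)`: the infimum of the closed-walk lengths over all
orderings (permutations) of the finite set `P`; `T(o, ∅) = 0`. -/
def optTourCost {X : Type*} [MetricSpace X] (o : X) (P : Finset X) : ℝ :=
  sInf (closedWalkLen o '' {l : List X | l.Perm P.toList})

open scoped Classical

/-! ### Auxiliary lemmas -/

lemma walkLen_nonneg {X : Type*} [MetricSpace X] : ∀ l : List X, 0 ≤ walkLen l
  | [] => le_refl 0
  | [_] => le_refl 0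
  | a :: b :: rest => add_nonneg dist_nonneg (walkLen_nonneg (b :: rest))

lemma closedWalkLen_nonneg {X : Type*} [MetricSpace X] (o : X) (l : List X) :
    0 ≤ closedWalkLen o l := walkLen_nonneg _

lemma optTourCost_bddBelow {X : Type*} [MetricSpace X] (o : X) (P : Finset X) :
    BddBelow (closedWalkLen o '' {l : List X | l.Perm P.toList}) := by
  refine ⟨0, ?_⟩
  rintro r ⟨l, _, rfl⟩
  exact closedWalkLen_nonneg o l

lemma optTourCost_le {X : Type*} [MetricSpace X] (o : X) (P : Finset X) (l : List X)
    (h : l.Perm P.toList) : optTourCost o P ≤ closedWalkLen o l :=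
  csInf_le (optTourCost_bddBelow o P) ⟨l, h, rfl⟩

lemma le_optTourCost {X : Type*} [MetricSpace X] (o : X) (P : Finset X) (c : ℝ)
    (h : ∀ l : List X, l.Perm P.toList → c ≤ closedWalkLen o l) : c ≤ optTourCost o P := by
  refine le_csInf ⟨closedWalkLen o P.toList, P.toList, List.Perm.refl _, rfl⟩ ?_
  rintro r ⟨l, hl, rfl⟩
  exact h l hl

/-- The point `(a, b)` of the Euclidean plane. -/
def pt (a b : ℝ) : EuclideanSpace ℝ (Fin 2) := !₂[a, b]

lemma dist_pt (a b c d : ℝ) : dist (pt a b) (pt c d) = Real.sqrt ((a-c)^2+(b-d)^2) := by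
  rw [EuclideanSpace.dist_eq]
  simp [Fin.sum_univ_two, pt, Real.dist_eq, sq_abs]

lemma pt_ne_fst {a b c d : ℝ} (h : a ≠ c) : pt a b ≠ pt c d :=
  fun he => h (by simpa [pt] using congrArg (fun v => v 0) he)

lemma pt_ne_snd {a b c d : ℝ} (h : b ≠ d) : pt a b ≠ pt c d :=
  fun he => h (by simpa [pt] using congrArg (fun v => v 1) he)

lemma two_le_sqrt {r : ℝ} (h : 4 ≤ r) : 2 ≤ Real.sqrt r := by
  nlinarith [Real.sq_sqrt (by linarith : (0:ℝ) ≤ r), Real.sqrt_nonneg r]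

lemma sqrt_four : Real.sqrt 4 = 2 := by
  rw [show (4:ℝ) = 2^2 by norm_num, Real.sqrt_sq (by norm_num)]

namespace NotSubmodularExample

/-- Depot: the origin. -/
def o : EuclideanSpace ℝ (Fin 2) := pt 0 0
/-- Corner `(-1,-1)`. -/
def c1 : EuclideanSpace ℝ (Fin 2) := pt (-1) (-1)
/-- Corner `(1,1)`. -/
def c2 : EuclideanSpace ℝ (Fin 2) := pt 1 1
/-- Corner `(-1,1)`. -/
def c3 : EuclideanSpace ℝ (Fin 2) := pt (-1) 1
/-- Corner `(1,-1)`. -/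
def c4 : EuclideanSpace ℝ (Fin 2) := pt 1 (-1)

lemma ne12 : c1 ≠ c2 := pt_ne_fst (by norm_num)
lemma ne13 : c1 ≠ c3 := pt_ne_snd (by norm_num)
lemma ne14 : c1 ≠ c4 := pt_ne_fst (by norm_num)
lemma ne23 : c2 ≠ c3 := pt_ne_fst (by norm_num)
lemma ne24 : c2 ≠ c4 := pt_ne_snd (by norm_num)
lemma ne34 : c3 ≠ c4 := pt_ne_fst (by norm_num)

lemma dist_o_corner : ∀ z ∈ [c4, c1, c2, c3], dist o z = Real.sqrt 2 := by
  intro z hz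
  simp only [List.mem_cons, List.not_mem_nil, or_false] at hz
  rcases hz with rfl | rfl | rfl | rfl <;>
    · simp only [o, c1, c2, c3, c4, dist_pt]
      norm_num

lemma dist_corner_corner : ∀ u ∈ [c4, c1, c2, c3], ∀ v ∈ [c4, c1, c2, c3],
    u ≠ v → 2 ≤ dist u v := by
  intro u hu v hv huv
  simp only [List.mem_cons, List.not_mem_nil, or_false] at hu hv
  rcases hu with rfl | rfl | rfl | rfl <;> rcases hv with rfl | rfl | rfl | rfl <;>
    first
    | exact absurd rfl huv
    | (simp only [c1, c2, c3, c4, dist_pt]; exact two_le_sqrt (by norm_num))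

/-- Lower bound for a tour through all four corners. -/
lemma four_lower (l : List (EuclideanSpace ℝ (Fin 2))) (h : l.Perm [c4, c1, c2, c3]) :
    2 * Real.sqrt 2 + 6 ≤ closedWalkLen o l := by
  have hlen : l.length = 4 := h.length_eq
  have hnd : l.Nodup := h.nodup_iff.mpr (by
    simp [List.nodup_cons, ne12, ne13, ne23, ne14.symm, ne24.symm, ne34.symm])
  have hmem : ∀ z ∈ l, z ∈ [c4, c1, c2, c3] := fun z hz => h.subset hz
  obtain ⟨p, q, r, t, rfl⟩ : ∃ p q r t, l = [p, q, r, t] := by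
    rcases l with _ | ⟨p, _ | ⟨q, _ | ⟨r, _ | ⟨t, _ | ⟨u, l'⟩⟩⟩⟩⟩ <;>
      simp only [List.length] at hlen <;>
      first
      | exact ⟨p, q, r, t, rfl⟩
      | omega
  have hp : p ∈ [c4, c1, c2, c3] := hmem p (by simp)
  have hq : q ∈ [c4, c1, c2, c3] := hmem q (by simp)
  have hr : r ∈ [c4, c1, c2, c3] := hmem r (by simp)
  have ht : t ∈ [c4, c1, c2, c3] := hmem t (by simp)
  have hpq : p ≠ q := by simp [List.nodup_cons] at hnd; tauto
  have hqr : q ≠ r := by simp [List.nodup_cons] at hnd; tauto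
  have hrt : r ≠ t := by simp [List.nodup_cons] at hnd; tauto
  have e1 : dist o p = Real.sqrt 2 := dist_o_corner p hp
  have e2 : dist t o = Real.sqrt 2 := by rw [dist_comm]; exact dist_o_corner t ht
  have m1 := dist_corner_corner p hp q hq hpq
  have m2 := dist_corner_corner q hq r hr hqr
  have m3 := dist_corner_corner r hr t ht hrt
  simp only [closedWalkLen, List.cons_append, List.nil_append, walkLen]
  linarith

/-- Lower bound for a tour through the two diagonal corners. -/
lemma two_lower (l : List (EuclideanSpace ℝ (Fin 2))) (h : l.Perm [c1, c2]) :
    2 * Real.sqrt 2 + Real.sqrt 8 ≤ closedWalkLen o l := by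
  have hlen : l.length = 2 := h.length_eq
  have hmem : ∀ z ∈ l, z ∈ [c1, c2] := fun z hz => h.subset hz
  have hnd : l.Nodup := h.nodup_iff.mpr (by simp [ne12])
  obtain ⟨p, q, rfl⟩ : ∃ p q, l = [p, q] := by
    rcases l with _ | ⟨p, _ | ⟨q, _ | ⟨r, l'⟩⟩⟩ <;>
      simp only [List.length] at hlen <;>
      first
      | exact ⟨p, q, rfl⟩
      | omega
  have hp : p ∈ [c1, c2] := hmem p (by simp)
  have hq : q ∈ [c1, c2] := hmem q (by simp)
  have hpq : p ≠ q := by simp [List.nodup_cons] at hnd; tauto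
  simp only [List.mem_cons, List.not_mem_nil, or_false] at hp hq
  simp only [closedWalkLen, List.cons_append, List.nil_append, walkLen]
  have d12 : dist c1 c2 = Real.sqrt 8 := by
    simp only [c1, c2, dist_pt]; norm_num
  have e1 : dist o c1 = Real.sqrt 2 := dist_o_corner c1 (by simp)
  have e2 : dist o c2 = Real.sqrt 2 := dist_o_corner c2 (by simp)
  rcases hp with rfl | rfl <;> rcases hq with rfl | rfl
  · exact absurd rfl hpq
  · rw [e1, dist_comm c2 o, e2, d12]; linarith
  · rw [e2, dist_comm c1 o, e1, dist_comm c2 c1, d12]; linarith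
  · exact absurd rfl hpq

end NotSubmodularExample

open NotSubmodularExample in
/-- Non-submodularity of the optimal tour cost in the Euclidean plane: there
exist a depot `o`, finite sets `A ⊆ B` and a point `x ∉ B` such that the
marginal cost of adding `x` to `B` strictly exceeds that of adding `x` to `A`. -/
theorem optTourCost_not_submodular :
    ∃ (o : EuclideanSpace ℝ (Fin 2)) (A B : Finset (EuclideanSpace ℝ (Fin 2)))
      (x : EuclideanSpace ℝ (Fin 2)),
      A ⊆ B ∧ x ∉ B ∧
      optTourCost o (insert x B) - optTourCost o B >
        optTourCost o (insert x A) - optTourCost o A := by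
  refine ⟨o, {c1, c2}, {c1, c2, c3}, c4, ?_, ?_, ?_⟩
  · intro z hz
    simp only [Finset.mem_insert, Finset.mem_singleton] at hz ⊢
    tauto
  · simp only [Finset.mem_insert, Finset.mem_singleton]
    push_neg
    exact ⟨ne14.symm, ne24.symm, ne34.symm⟩
  · -- toList permutation facts
    have hc2 : c2 ∉ ({c3} : Finset (EuclideanSpace ℝ (Fin 2))) := by simp [ne23]
    have hc1 : c1 ∉ ({c2, c3} : Finset (EuclideanSpace ℝ (Fin 2))) := by
      simp [ne12, ne13]
    have hc4B : c4 ∉ ({c1, c2, c3} : Finset (EuclideanSpace ℝ (Fin 2))) := by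
      simp [(ne14.symm : c4 ≠ c1), (ne24.symm : c4 ≠ c2), (ne34.symm : c4 ≠ c3)]
    have hc1A : c1 ∉ ({c2} : Finset (EuclideanSpace ℝ (Fin 2))) := by simp [ne12]
    have hc4A : c4 ∉ ({c1, c2} : Finset (EuclideanSpace ℝ (Fin 2))) := by
      simp [(ne14.symm : c4 ≠ c1), (ne24.symm : c4 ≠ c2)]
    have pB : ({c1, c2, c3} : Finset (EuclideanSpace ℝ (Fin 2))).toList.Perm [c1, c2, c3] := by
      refine (Finset.toList_insert hc1).trans ?_
      refine List.Perm.cons c1 ?_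
      refine (Finset.toList_insert hc2).trans ?_
      simp
    have pA : ({c1, c2} : Finset (EuclideanSpace ℝ (Fin 2))).toList.Perm [c1, c2] := by
      refine (Finset.toList_insert hc1A).trans ?_
      simp
    have pxB : (insert c4 ({c1, c2, c3} : Finset (EuclideanSpace ℝ (Fin 2)))).toList.Perm
        [c4, c1, c2, c3] :=
      (Finset.toList_insert hc4B).trans (List.Perm.cons c4 pB)
    have pxA : (insert c4 ({c1, c2} : Finset (EuclideanSpace ℝ (Fin 2)))).toList.Perm
        [c4, c1, c2] :=
      (Finset.toList_insert hc4A).trans (List.Perm.cons c4 pA)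
    -- distance values
    have d_o1 : dist o c1 = Real.sqrt 2 := dist_o_corner c1 (by simp)
    have d_o2 : dist o c2 = Real.sqrt 2 := dist_o_corner c2 (by simp)
    have d_1o : dist c1 o = Real.sqrt 2 := by rw [dist_comm]; exact d_o1
    have d_2o : dist c2 o = Real.sqrt 2 := by rw [dist_comm]; exact d_o2
    have d_23 : dist c2 c3 = 2 := by
      simp only [c2, c3, dist_pt]; norm_num [sqrt_four]
    have d_31 : dist c3 c1 = 2 := by
      simp only [c3, c1, dist_pt]; norm_num [sqrt_four]
    have d_14 : dist c1 c4 = 2 := by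
      simp only [c1, c4, dist_pt]; norm_num [sqrt_four]
    have d_42 : dist c4 c2 = 2 := by
      simp only [c4, c2, dist_pt]; norm_num [sqrt_four]
    -- upper bound on T(o, B) via the tour o, c2, c3, c1, o
    have uB : optTourCost o {c1, c2, c3} ≤ 2 * Real.sqrt 2 + 4 := by
      have hmem : [c2, c3, c1].Perm ({c1, c2, c3} :
          Finset (EuclideanSpace ℝ (Fin 2))).toList := by
        refine List.Perm.trans ?_ pB.symm
        have h := (List.perm_append_comm (l₁ := [c2, c3]) (l₂ := [c1]))
        simpa using h
      refine (optTourCost_le o _ _ hmem).trans ?_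
      simp only [closedWalkLen, List.cons_append, List.nil_append, walkLen]
      rw [d_o2, d_23, d_31, d_1o]
      linarith
    -- upper bound on T(o, insert x A) via the tour o, c1, c4, c2, o
    have uxA : optTourCost o (insert c4 {c1, c2}) ≤ 2 * Real.sqrt 2 + 4 := by
      have hmem : [c1, c4, c2].Perm (insert c4 ({c1, c2} :
          Finset (EuclideanSpace ℝ (Fin 2)))).toList :=
        (List.Perm.swap c4 c1 [c2]).trans pxA.symm
      refine (optTourCost_le o _ _ hmem).trans ?_
      simp only [closedWalkLen, List.cons_append, List.nil_append, walkLen]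
      rw [d_o1, d_14, d_42, d_2o]
      linarith
    -- lower bound on T(o, insert x B)
    have lxB : 2 * Real.sqrt 2 + 6 ≤ optTourCost o (insert c4 {c1, c2, c3}) :=
      le_optTourCost o _ _ (fun l hl => four_lower l (hl.trans pxB))
    -- lower bound on T(o, A)
    have lA : 2 * Real.sqrt 2 + Real.sqrt 8 ≤ optTourCost o {c1, c2} :=
      le_optTourCost o _ _ (fun l hl => two_lower l (hl.trans pA))
    have h8 : (2:ℝ) < Real.sqrt 8 := by
      nlinarith [Real.sq_sqrt (show (0:ℝ) ≤ 8 by norm_num), Real.sqrt_nonneg 8]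
    linarith

end
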